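/- If S = ė + Γe where Γ is a positive definite matrix, and S(t) → 0 as t → ∞ with e bounded and continuously differentiable, then e(t) → 0 as t → ∞. -/

import Mathlib

open Matrix Filter Real

lemma dot_self_nonneg' {n : ℕ} (x : Fin n → ℝ) : 0 ≤ x ⬝ᵥ x :=
  Finset.sum_nonneg fun i _ => mul_self_nonneg (x i)

lemma sq_le_dot' {n : ℕ} (x : Fin n → ℝ) (i : Fin n) : x i * x i ≤ x ⬝ᵥ x :=
  Finset.single_le_sum (f := fun j => x j * x j) (fun _ _ => mul_self_nonneg _)
    (Finset.mem_univ i)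

lemma norm_sq_le_dot {n : ℕ} (x : Fin n → ℝ) : ‖x‖ ^ 2 ≤ x ⬝ᵥ x := by
  have h : ‖x‖ ≤ Real.sqrt (x ⬝ᵥ x) := by
    rw [pi_norm_le_iff_of_nonneg (Real.sqrt_nonneg _)]
    intro i
    apply Real.le_sqrt_of_sq_le
    calc ‖x i‖ ^ 2 = x i * x i := by rw [sq, Real.norm_eq_abs, abs_mul_abs_self]
      _ ≤ x ⬝ᵥ x := sq_le_dot' x i
  calc ‖x‖ ^ 2 ≤ Real.sqrt (x ⬝ᵥ x) ^ 2 := by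
        exact pow_le_pow_left₀ (norm_nonneg _) h 2
    _ = x ⬝ᵥ x := Real.sq_sqrt (dot_self_nonneg' x)


lemma dot_self_nonneg {n : ℕ} (x : Fin n → ℝ) : 0 ≤ x ⬝ᵥ x :=
  Finset.sum_nonneg fun i _ => mul_self_nonneg (x i)

lemma sq_le_dot {n : ℕ} (x : Fin n → ℝ) (i : Fin n) : x i * x i ≤ x ⬝ᵥ x :=
  Finset.single_le_sum (f := fun j => x j * x j) (fun j _ => mul_self_nonneg _)
    (Finset.mem_univ i)

lemma coercive {n : ℕ} {Γ : Matrix (Fin n) (Fin n) ℝ} (hΓ : Γ.PosDef) :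
    ∃ lam > 0, ∀ x : Fin n → ℝ, lam * (x ⬝ᵥ x) ≤ x ⬝ᵥ Γ.mulVec x := by
  rcases Nat.eq_zero_or_pos n with hn | hn
  · exact ⟨1, one_pos, fun x => by subst hn; simp [dotProduct]⟩
  · set K : Set (Fin n → ℝ) := {x | x ⬝ᵥ x = 1} with hK
    have hcont : Continuous fun x : Fin n → ℝ => x ⬝ᵥ Γ.mulVec x :=
      continuous_id.dotProduct
        ((continuous_const : Continuous fun _ : Fin n → ℝ => Γ).matrix_mulVec continuous_id)
    have hcont2 : Continuous fun x : Fin n → ℝ => x ⬝ᵥ x :=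
      continuous_id.dotProduct continuous_id
    have hKc : IsCompact K := by
      apply Metric.isCompact_of_isClosed_isBounded
      · exact isClosed_eq hcont2 continuous_const
      · rw [Metric.isBounded_iff_subset_closedBall 0]
        refine ⟨1, fun x hx => ?_⟩
        simp only [Metric.mem_closedBall, dist_zero_right]
        rw [pi_norm_le_iff_of_nonneg zero_le_one]
        intro i
        have h1 : x i * x i ≤ x ⬝ᵥ x := sq_le_dot x i
        have h2 : x ⬝ᵥ x = 1 := hx.out
        have : |x i| ≤ 1 := by nlinarith [abs_nonneg (x i), abs_mul_abs_self (x i)]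
        simpa using this
    have hKne : K.Nonempty := by
      refine ⟨Pi.single ⟨0, hn⟩ 1, ?_⟩
      simp [hK, dotProduct, Pi.single_apply]
    obtain ⟨x₀, hx₀K, hmin⟩ := hKc.exists_isMinOn hKne hcont.continuousOn
    set lam := x₀ ⬝ᵥ Γ.mulVec x₀ with hlam
    have hx₀ne : x₀ ≠ 0 := by
      intro h; rw [h] at hx₀K; simp [hK, dotProduct] at hx₀K
    have hlampos : 0 < lam := by simpa [star_trivial] using hΓ.dotProduct_mulVec_pos hx₀ne
    refine ⟨lam, hlampos, fun x => ?_⟩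
    rcases eq_or_ne x 0 with rfl | hx
    · simp
    · have hxx : 0 < x ⬝ᵥ x := by
        rcases (dot_self_nonneg x).lt_or_eq with h | h
        · exact h
        · exfalso
          apply hx
          funext i
          have h1 : x i * x i ≤ x ⬝ᵥ x := sq_le_dot x i
          have : x i = 0 := by nlinarith [mul_self_nonneg (x i)]
          simpa using this
      set c := Real.sqrt (x ⬝ᵥ x) with hc
      have hcpos : 0 < c := Real.sqrt_pos.2 hxx
      have hc' : c ≠ 0 := ne_of_gt hcpos
      have hcsq : c * c = x ⬝ᵥ x := Real.mul_self_sqrt hxx.le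
      have hy : (c⁻¹ • x) ∈ K := by
        simp only [hK, Set.mem_setOf_eq, smul_dotProduct, dotProduct_smul, smul_eq_mul]
        rw [← hcsq]; field_simp
      have hle := hmin hy
      have key : (c⁻¹ • x) ⬝ᵥ Γ.mulVec (c⁻¹ • x) = c⁻¹ * c⁻¹ * (x ⬝ᵥ Γ.mulVec x) := by
        rw [mulVec_smul, smul_dotProduct, dotProduct_smul, smul_eq_mul, smul_eq_mul]
        ring
      have h2 : lam ≤ c⁻¹ * c⁻¹ * (x ⬝ᵥ Γ.mulVec x) := by simpa [key] using hle
      have h3 : lam * (c * c) ≤ x ⬝ᵥ Γ.mulVec x := by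
        calc lam * (c*c) ≤ (c⁻¹ * c⁻¹ * (x ⬝ᵥ Γ.mulVec x)) * (c*c) := by nlinarith
          _ = x ⬝ᵥ Γ.mulVec x := by field_simp
      rwa [hcsq] at h3

lemma dot_le_dot_dot {n : ℕ} (lam : ℝ) (hlam : 0 < lam) (x y : Fin n → ℝ) :
    2 * (x ⬝ᵥ y) ≤ lam * (x ⬝ᵥ x) + (y ⬝ᵥ y) / lam := by
  have : ∀ i : Fin n, 2 * (x i * y i) ≤ lam * (x i * x i) + (y i * y i) / lam := by
    intro i
    have h := sq_nonneg (lam * x i - y i)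
    have key : 2 * (x i * y i) * lam ≤ (lam * (x i * x i) + y i * y i / lam) * lam := by
      rw [add_mul, div_mul_cancel₀ _ (ne_of_gt hlam)]
      nlinarith
    exact le_of_mul_le_mul_right key hlam
  calc 2 * (x ⬝ᵥ y) = ∑ i, 2 * (x i * y i) := by rw [dotProduct, Finset.mul_sum]
    _ ≤ ∑ i, (lam * (x i * x i) + (y i * y i) / lam) := Finset.sum_le_sum fun i _ => this i
    _ = lam * (x ⬝ᵥ x) + (y ⬝ᵥ y) / lam := by
        rw [Finset.sum_add_distrib, dotProduct, dotProduct, Finset.mul_sum, ← Finset.sum_div]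

theorem filtered_error_convergence {n : ℕ}
    (e : ℝ → (Fin n → ℝ)) (Γ : Matrix (Fin n) (Fin n) ℝ)
    (hΓ : Γ.PosDef)
    (he : ContDiff ℝ 1 e)
    (hbound : ∃ B, ∀ t, ‖e t‖ ≤ B)
    (S : ℝ → (Fin n → ℝ))
    (hS : ∀ t, S t = deriv e t + Γ.mulVec (e t))
    (hconv : Filter.Tendsto S Filter.atTop (nhds 0)) :
    Filter.Tendsto e Filter.atTop (nhds 0) := by
  clear hbound
  obtain ⟨lam, hlam, hco⟩ := coercive hΓ
  have hdiff : Differentiable ℝ e := he.differentiable one_ne_zero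
  set φ : ℝ → ℝ := fun t => e t ⬝ᵥ e t with hφdef
  have hφd : ∀ t, HasDerivAt φ (2 * (e t ⬝ᵥ deriv e t)) t := by
    intro t
    have hc : ∀ i, HasDerivAt (fun s => e s i) (deriv e t i) t :=
      hasDerivAt_pi.1 (hdiff t).hasDerivAt
    have : HasDerivAt (fun s => ∑ i, e s i * e s i)
        (∑ i, (deriv e t i * e t i + e t i * deriv e t i)) t :=
      HasDerivAt.fun_sum fun i _ => (hc i).mul (hc i)
    convert this using 1
    · funext s; simp [hφdef, dotProduct]
    rw [dotProduct, Finset.mul_sum]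
    congr 1; funext i; ring
  -- key estimate on deriv φ
  have hφ' : ∀ t, deriv φ t ≤ -lam * φ t + (S t ⬝ᵥ S t) / lam := by
    intro t
    rw [(hφd t).deriv]
    have hde : deriv e t = S t - Γ.mulVec (e t) := by rw [hS t]; abel
    have h1 : e t ⬝ᵥ deriv e t = e t ⬝ᵥ S t - e t ⬝ᵥ Γ.mulVec (e t) := by
      rw [hde, dotProduct_sub]
    have h2 : 2 * (e t ⬝ᵥ S t) ≤ lam * φ t + (S t ⬝ᵥ S t) / lam :=
      dot_le_dot_dot lam hlam (e t) (S t)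
    have h3 : lam * φ t ≤ e t ⬝ᵥ Γ.mulVec (e t) := hco (e t)
    nlinarith [h3]
  rw [NormedAddCommGroup.tendsto_nhds_zero]
  intro ε hε
  -- choose a such that S is small beyond a
  set δ : ℝ := lam * ε / (2 * (n + 1)) with hδdef
  have hδpos : 0 < δ := by positivity
  have hSsmall : ∀ᶠ t in atTop, ‖S t‖ < δ :=
    (NormedAddCommGroup.tendsto_nhds_zero.1 hconv) δ hδpos
  obtain ⟨a, ha⟩ := eventually_atTop.1 hSsmall
  have hψ : ∀ t ≥ a, S t ⬝ᵥ S t ≤ lam ^ 2 * ε ^ 2 / 2 := by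
    intro t ht
    have h1 : S t ⬝ᵥ S t ≤ (n : ℝ) * δ ^ 2 := by
      rw [dotProduct]
      calc ∑ i, S t i * S t i ≤ ∑ _i : Fin n, δ ^ 2 := by
            apply Finset.sum_le_sum
            intro i _
            have h2 : ‖S t i‖ ≤ ‖S t‖ := norm_le_pi_norm (S t) i
            have h3 : ‖S t‖ < δ := ha t ht
            have : |S t i| ≤ δ := by rw [← Real.norm_eq_abs]; linarith
            nlinarith [abs_mul_abs_self (S t i), abs_nonneg (S t i)]
        _ = (n : ℝ) * δ ^ 2 := by simp [Finset.sum_const, nsmul_eq_mul]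
    have h4 : (n : ℝ) * δ ^ 2 ≤ lam ^ 2 * ε ^ 2 / 2 := by
      rw [hδdef]
      rw [div_pow, mul_pow, mul_div_assoc']
      rw [div_le_div_iff₀ (by positivity) (by norm_num)]
      have hn0 : (0:ℝ) ≤ (n:ℝ) := Nat.cast_nonneg n
      have hA : (0:ℝ) ≤ lam ^ 2 * ε ^ 2 := by positivity
      nlinarith [mul_nonneg hA hn0, mul_nonneg hA (mul_nonneg hn0 hn0)]
    linarith
  -- the auxiliary decreasing function
  set h : ℝ → ℝ := fun t => (φ t - ε ^ 2 / 2) * Real.exp (lam * t) with hhdef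
  have hhd : ∀ t, HasDerivAt h
      ((2 * (e t ⬝ᵥ deriv e t)) * Real.exp (lam * t)
        + (φ t - ε ^ 2 / 2) * (lam * Real.exp (lam * t))) t := by
    intro t
    have h1 : HasDerivAt (fun s => φ s - ε ^ 2 / 2) (2 * (e t ⬝ᵥ deriv e t)) t :=
      (hφd t).sub_const _
    have h2 : HasDerivAt (fun s => Real.exp (lam * s)) (lam * Real.exp (lam * t)) t := by
      have := (Real.hasDerivAt_exp (lam * t)).comp t ((hasDerivAt_id t).const_mul lam)
      simpa [mul_comm, Function.comp_def] using this
    exact h1.mul h2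
  have hanti : AntitoneOn h (Set.Ici a) := by
    apply antitoneOn_of_deriv_nonpos (convex_Ici a)
    · exact fun t _ => ((hhd t).continuousAt).continuousWithinAt
    · exact fun t _ => ((hhd t).differentiableAt).differentiableWithinAt
    · intro t ht
      rw [interior_Ici] at ht
      rw [(hhd t).deriv]
      have h1 : deriv φ t ≤ -lam * φ t + (S t ⬝ᵥ S t) / lam := hφ' t
      rw [(hφd t).deriv] at h1
      have h2 : S t ⬝ᵥ S t ≤ lam ^ 2 * ε ^ 2 / 2 := hψ t (le_of_lt ht)
      have h3 : (S t ⬝ᵥ S t) / lam ≤ lam * ε ^ 2 / 2 := by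
        rw [div_le_iff₀ hlam] at *
        nlinarith
      have hexp : 0 < Real.exp (lam * t) := Real.exp_pos _
      have : 2 * (e t ⬝ᵥ deriv e t) + (φ t - ε ^ 2 / 2) * lam ≤ 0 := by nlinarith
      nlinarith
  -- conclude: φ t ≤ ε^2/2 + C * exp (-lam * t)
  set C : ℝ := |φ a - ε ^ 2 / 2| * Real.exp (lam * a) with hCdef
  have hbd : ∀ t ≥ a, φ t ≤ ε ^ 2 / 2 + C * Real.exp (-(lam * t)) := by
    intro t ht
    have h1 : h t ≤ h a := hanti Set.self_mem_Ici ht ht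
    have hexp : 0 < Real.exp (lam * t) := Real.exp_pos _
    have h2 : h a ≤ C := by
      rw [hhdef, hCdef]
      exact mul_le_mul_of_nonneg_right (le_abs_self _) (Real.exp_pos _).le
    have h3 : (φ t - ε ^ 2 / 2) * Real.exp (lam * t) ≤ C := le_trans h1 h2
    have h4 : φ t - ε ^ 2 / 2 ≤ C * Real.exp (-(lam * t)) := by
      rw [Real.exp_neg]
      rw [← le_div_iff₀ hexp] at h3
      rwa [div_eq_mul_inv] at h3
    linarith
  -- eventually the exponential term is small
  have htail : ∀ᶠ t in atTop, C * Real.exp (-(lam * t)) < ε ^ 2 / 4 := by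
    have hlim : Tendsto (fun t => C * Real.exp (-(lam * t))) atTop (nhds 0) := by
      have h0 : Tendsto (fun t : ℝ => -(lam * t)) atTop atBot := by
        apply tendsto_neg_atBot_iff.2
        exact Tendsto.const_mul_atTop hlam tendsto_id
      have := Real.tendsto_exp_atBot.comp h0
      simpa using this.const_mul C
    have := hlim.eventually (eventually_lt_nhds (show (0:ℝ) < ε ^ 2 / 4 by positivity))
    simpa using this
  filter_upwards [htail, eventually_ge_atTop a] with t h1 h2
  have h3 : φ t < ε ^ 2 := by
    have := hbd t h2
    nlinarith
  have h4 : ‖e t‖ ^ 2 ≤ φ t := norm_sq_le_dot (e t)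
  have : ‖e t‖ ^ 2 < ε ^ 2 := lt_of_le_of_lt h4 h3
  exact lt_of_pow_lt_pow_left₀ 2 hε.le this
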